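/- Let M be an ordered matroid and K = M|F a spanning restriction (F contains a base of M). Then for bases A, B of K (which are also bases of M), A ≤_K B in the external order of K if and only if A ≤_M B in the external order of M; i.e., the inclusion of bases induces an order embedding of the external order of K into that of M. -/

import Mathlib

open Matroid Set

variable {α : Type*}

/-- A circuit: a minimal dependent subset of the ground set. -/
def mCircuit (M : Matroid α) (C : Set α) : Prop :=
  C ⊆ M.E ∧ ¬ M.Indep C ∧ ∀ D ⊂ C, M.Indep D

/-- e is active with respect to F: some circuit C ⊆ F ∪ {e} has e as its minimum. -/
def mAct [LinearOrder α] (M : Matroid α) (F : Set α) : Set α :=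
  {e | ∃ C, mCircuit M C ∧ C ⊆ F ∪ {e} ∧ e ∈ C ∧ ∀ x ∈ C, e ≤ x}

/-- The externally active elements with respect to F. -/
def mExt [LinearOrder α] (M : Matroid α) (F : Set α) : Set α :=
  mAct M F \ F

/-- Las Vergnas' external order on bases. -/
def extLE [LinearOrder α] (M : Matroid α) (A B : Set α) : Prop :=
  A ⊆ B ∪ mExt M B

/-- The lexicographically maximal base contained in a spanning set F. -/
def maxBas [LinearOrder α] (M : Matroid α) (F : Set α) : Set α :=
  F \ mAct M F

lemma mCircuit_restrict_iff (M : Matroid α) {F C : Set α} (hF : F ⊆ M.E) (hC : C ⊆ F) :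
    mCircuit (M ↾ F) C ↔ mCircuit M C := by
  simp only [mCircuit, Matroid.restrict_ground_eq, Matroid.restrict_indep_iff]
  constructor
  · rintro ⟨-, h2, h3⟩
    exact ⟨hC.trans hF, fun hi => h2 ⟨hi, hC⟩, fun D hD => ((h3 D hD).1)⟩
  · rintro ⟨-, h2, h3⟩
    exact ⟨hC, fun hi => h2 hi.1, fun D hD => ⟨h3 D hD, hD.subset.trans hC⟩⟩

theorem extOrder_embedding [LinearOrder α] (M : Matroid α) [M.Finite]
    (F : Set α) (hF : F ⊆ M.E) (hsp : ∃ B, M.IsBase B ∧ B ⊆ F) :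
    (∀ A, (M ↾ F).IsBase A → M.IsBase A) ∧
    (∀ A B, (M ↾ F).IsBase A → (M ↾ F).IsBase B →
      (extLE (M ↾ F) A B ↔ extLE M A B)) := by
  obtain ⟨B₀, hB₀, hB₀F⟩ := hsp
  have hbase : ∀ A, (M ↾ F).IsBase A → M.IsBase A := by
    intro A hA
    rw [Matroid.isBase_restrict_iff hF] at hA
    exact hA.isBase_of_isBase_subset hB₀ hB₀F
  refine ⟨hbase, fun A B hA hB => ?_⟩
  have hAF : A ⊆ F := hA.subset_ground
  have hBF : B ⊆ F := hB.subset_ground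
  -- key: mAct (M ↾ F) B = mAct M B ∩ F
  have hact : mAct (M ↾ F) B = mAct M B ∩ F := by
    ext e
    simp only [mAct, mem_setOf_eq, mem_inter_iff]
    constructor
    · rintro ⟨C, hC, hCB, heC, hmin⟩
      have hCF : C ⊆ F := hC.1
      exact ⟨⟨C, (mCircuit_restrict_iff M hF hCF).1 hC, hCB, heC, hmin⟩, hCF heC⟩
    · rintro ⟨⟨C, hC, hCB, heC, hmin⟩, heF⟩
      have hCF : C ⊆ F := hCB.trans (union_subset hBF (singleton_subset_iff.2 heF))
      exact ⟨C, (mCircuit_restrict_iff M hF hCF).2 hC, hCB, heC, hmin⟩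
  constructor
  · intro h a ha
    rcases h ha with hb | hb
    · exact Or.inl hb
    · refine Or.inr ?_
      simp only [mExt, hact, mem_diff, mem_inter_iff] at hb ⊢
      exact ⟨hb.1.1, hb.2⟩
  · intro h a ha
    rcases h ha with hb | hb
    · exact Or.inl hb
    · refine Or.inr ?_
      simp only [mExt, hact, mem_diff, mem_inter_iff] at hb ⊢
      exact ⟨⟨hb.1, hAF ha⟩, hb.2⟩
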